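/- Let f be a Boolean network of dimension n and ⟨f⟩ its interval-semantics encoding. For every i ∈ {1,…,n}, (2i−1, 2i−1) is never a negative edge of G(⟨f⟩), i.e. there is no negative self-loop on the node 2i−1 in the influence graph of ⟨f⟩. -/
import Mathlib


/-- Asynchronous transition relation of a Boolean network `f`:
`x → y` iff exactly one component `i` differs and `y i = f i x`. -/
def asyncStep {ι : Type} (f : ι → (ι → Bool) → Bool) (x y : ι → Bool) : Prop :=
  ∃ i : ι, x i ≠ y i ∧ (∀ j : ι, j ≠ i → x j = y j) ∧ y i = f i x

/-- Index of the "write" node `2i-1` (0-indexed: `2i`). -/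
def wIdx {n : ℕ} (i : Fin n) : Fin (2 * n) := ⟨2 * i.val, by have := i.isLt; omega⟩

/-- Index of the "read" node `2i` (0-indexed: `2i+1`). -/
def rIdx {n : ℕ} (i : Fin n) : Fin (2 * n) := ⟨2 * i.val + 1, by have := i.isLt; omega⟩

/-- `γ : 𝔹^{2n} → 𝔹^n`, projection on read nodes. -/
def gam {n : ℕ} (z : Fin (2 * n) → Bool) : Fin n → Bool := fun i => z (rIdx i)

/-- `α : 𝔹^n → 𝔹^{2n}`, consistent configuration. -/
def alph {n : ℕ} (x : Fin n → Bool) : Fin (2 * n) → Bool :=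
  fun k => x ⟨k.val / 2, by have := k.isLt; omega⟩

/-- Interval-semantics encoding `⟨f⟩` of a Boolean network `f`. -/
def encode {n : ℕ} (f : Fin n → (Fin n → Bool) → Bool) :
    Fin (2 * n) → (Fin (2 * n) → Bool) → Bool := fun k z =>
  let i : Fin n := ⟨k.val / 2, by have := k.isLt; omega⟩
  if k.val % 2 = 0 then
    (f i (gam z) && (!(z (rIdx i)) || z (wIdx i))) || (!(z (rIdx i)) && z (wIdx i))
  else
    z (wIdx i)

/-- Positive edge `(j,i)` of the influence graph `G(f)`. -/
def posEdge {ι : Type} (f : ι → (ι → Bool) → Bool) (j i : ι) : Prop :=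
  ∃ x y : ι → Bool, (∀ k : ι, k ≠ j → x k = y k) ∧ x j = false ∧ y j = true ∧
    f i x = false ∧ f i y = true

/-- Negative edge `(j,i)` of the influence graph `G(f)`. -/
def negEdge {ι : Type} (f : ι → (ι → Bool) → Bool) (j i : ι) : Prop :=
  ∃ x y : ι → Bool, (∀ k : ι, k ≠ j → x k = y k) ∧ x j = false ∧ y j = true ∧
    f i x = true ∧ f i y = false

/-- there is never a negative self-loop on `2i−1` in `G(⟨f⟩)`. -/
theorem no_neg_selfloop {n : ℕ} (f : Fin n → (Fin n → Bool) → Bool) (i : Fin n) :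
    ¬ negEdge (encode f) (wIdx i) (wIdx i) := by
  rintro ⟨x, y, h, hx, hy, hfx, hfy⟩
  have hr : rIdx i ≠ wIdx i := by
    simp [rIdx, wIdx, Fin.ext_iff]
  have hgam : gam x = gam y := by
    funext j
    simp only [gam]
    apply h
    simp [rIdx, wIdx, Fin.ext_iff]
    try omega
  have hxr : x (rIdx i) = y (rIdx i) := h _ hr
  have hi : (⟨(wIdx i).val / 2, by have := (wIdx i).isLt; omega⟩ : Fin n) = i := by
    simp [wIdx, Fin.ext_iff]
    try omega
  have hmod : (wIdx i).val % 2 = 0 := by simp [wIdx]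
  simp only [encode, hmod, if_pos, hi] at hfx hfy
  rw [hx] at hfx
  rw [hy] at hfy
  rw [hgam, hxr] at hfx
  cases hc : f i (gam y) <;> rw [hc] at hfx hfy <;>
    cases hd : y (rIdx i) <;> rw [hd] at hfx hfy <;> simp_all
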